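/- Let G be a cyclic group of composite order generated by g, let p be the smallest prime divisor of |G|, and let H ≤ G be the subgroup of order p. Let S be the sequence consisting of g repeated |G|/p − 1 times together with each element h of H repeated |G|/p times. Then |S| = |G| + |G|/p − 1 and Σ_{|G|}(S) ≠ G. -/

import Mathlib

/-- The set of `n`-term subsequence sums of the finite sequence (multiset) `S`. -/
def subseqSums {G : Type*} [AddCommGroup G] (S : Multiset G) (n : ℕ) : Set G :=
  {x | ∃ T ≤ S, Multiset.card T = n ∧ T.sum = x}

open scoped Classical in
theorem stmt_6 {G : Type*} [AddCommGroup G] [Fintype G]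
    (g : G) (hgen : AddSubgroup.zmultiples g = ⊤)
    (hcomp : ¬ (Nat.card G).Prime) (hnontriv : 1 < Nat.card G)
    (p : ℕ) (hp : p = (Nat.card G).minFac)
    (H : AddSubgroup G) (hH : Nat.card H = p)
    (S : Multiset G)
    (hS : S = Multiset.replicate (Nat.card G / p - 1) g +
        ((H : Set G).toFinset.val.bind fun h => Multiset.replicate (Nat.card G / p) h)) :
    Multiset.card S = Nat.card G + Nat.card G / p - 1 ∧
      subseqSums S (Nat.card G) ≠ Set.univ := by
  classical
  set n := Nat.card G with hn
  have hp' : p.Prime := hp ▸ Nat.minFac_prime (by omega)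
  have hpdvd : p ∣ n := hp ▸ Nat.minFac_dvd n
  set m := n / p with hm
  have hpm : p * m = n := Nat.mul_div_cancel' hpdvd
  have hp2 : 2 ≤ p := hp'.two_le
  have hm1 : 1 ≤ m := by
    rcases Nat.eq_zero_or_pos m with h | h
    · rw [h, mul_zero] at hpm; omega
    · exact h
  have hm2 : 2 ≤ m := by
    by_contra h
    have h1 : m = 1 := by omega
    rw [h1, mul_one] at hpm
    exact hcomp (hpm ▸ hp')
  set B := ((H : Set G).toFinset.val.bind fun h => Multiset.replicate m h) with hB
  have hcardHfin : (H : Set G).toFinset.card = p := by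
    rw [Set.toFinset_card, ← Nat.card_eq_fintype_card]
    exact hH
  have hcardB : Multiset.card B = n := by
    rw [hB, Multiset.card_bind]
    have : Multiset.map (Multiset.card ∘ fun h => Multiset.replicate m h)
        (H : Set G).toFinset.val = Multiset.replicate p m := by
      rw [show (Multiset.card ∘ fun h : G => Multiset.replicate m h) = fun _ => m from
        funext fun h => Multiset.card_replicate m h]
      rw [Multiset.map_const', ← hcardHfin]
      rfl
    rw [this, Multiset.sum_replicate, smul_eq_mul, hpm]
  have hcardS : Multiset.card S = n + m - 1 := by
    rw [hS, Multiset.card_add, Multiset.card_replicate, hcardB]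
    omega
  refine ⟨hcardS, ?_⟩
  -- order of g is n
  have horder : addOrderOf g = n := by
    rw [← Nat.card_zmultiples, hgen, AddSubgroup.card_top]
  -- g ∉ H
  have hgH : g ∉ H := by
    intro hg
    have : (⊤ : AddSubgroup G) ≤ H := hgen ▸ AddSubgroup.zmultiples_le.mpr hg
    have hHt : H = ⊤ := top_le_iff.mp this ▸ rfl
    have : p = n := by rw [← hH, hHt, AddSubgroup.card_top]
    exact hcomp (this ▸ hp')
  -- membership in B means membership in H
  have hmemB : ∀ x ∈ B, x ∈ H := by
    intro x hx
    rw [hB, Multiset.mem_bind] at hx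
    obtain ⟨h, hh, hx⟩ := hx
    rw [Multiset.eq_of_mem_replicate hx]
    simpa using hh
  have hBsum : B.sum ∈ H := H.multiset_sum_mem B hmemB
  -- p • x = 0 for x ∈ H
  have hpH : ∀ x ∈ H, p • x = 0 := by
    intro x hx
    have h1 : addOrderOf (⟨x, hx⟩ : H) ∣ p := hH ▸ addOrderOf_dvd_natCard _
    have h2 : p • (⟨x, hx⟩ : H) = 0 := addOrderOf_dvd_iff_nsmul_eq_zero.mp h1
    have := congrArg (Subtype.val) h2
    simpa using this
  -- a nonzero element of H
  have : Nontrivial H := by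
    rw [← Finite.one_lt_card_iff_nontrivial, Nat.card_eq_fintype_card] at *
    omega
  obtain ⟨y, hy⟩ := exists_ne (0 : H)
  have hh₀H : (y : G) ∈ H := y.2
  have hh₀ : (y : G) ≠ 0 := fun h => hy (ZeroMemClass.coe_eq_zero.mp h)
  -- main argument
  intro hcontra
  have hyin : B.sum + (y : G) ∈ subseqSums S n := by
    rw [hcontra]; exact Set.mem_univ _
  obtain ⟨T, hTS, hTcard, hTsum⟩ := hyin
  set T₁ := T.filter (· = g) with hT₁def
  set T₂ := T.filter (fun x => ¬ x = g) with hT₂def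
  have hT12 : T₁ + T₂ = T := Multiset.filter_add_not _ _
  set k := Multiset.card T₁ with hk
  have hT₁rep : T₁ = Multiset.replicate k g := by
    rw [hk]
    exact Multiset.eq_replicate_card.mpr fun b hb => (Multiset.mem_filter.mp hb).2
  -- S filtered
  have hBne : ∀ b ∈ B, ¬ b = g := fun b hb hbg => hgH (hbg ▸ hmemB b hb)
  have hSfil1 : S.filter (· = g) = Multiset.replicate (m - 1) g := by
    rw [hS, Multiset.filter_add]
    rw [Multiset.filter_eq_self.mpr (fun b hb => Multiset.eq_of_mem_replicate hb)]
    rw [Multiset.filter_eq_nil.mpr hBne]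
    simp
  have hSfil2 : S.filter (fun x => ¬ x = g) = B := by
    rw [hS, Multiset.filter_add]
    rw [Multiset.filter_eq_nil.mpr
      (fun b hb hbg => hbg (Multiset.eq_of_mem_replicate hb))]
    rw [Multiset.filter_eq_self.mpr hBne]
    simp
  have hT₁le : T₁ ≤ Multiset.replicate (m - 1) g := by
    rw [← hSfil1]; exact Multiset.filter_le_filter _ hTS
  have hkle : k ≤ m - 1 := by
    have := Multiset.card_le_card hT₁le
    simpa using this
  have hT₂le : T₂ ≤ B := by
    rw [← hSfil2]; exact Multiset.filter_le_filter _ hTS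
  have hT₂H : T₂.sum ∈ H := H.multiset_sum_mem _ fun x hx => hmemB x (Multiset.mem_of_le hT₂le hx)
  have hsumeq : k • g + T₂.sum = B.sum + (y : G) := by
    rw [← hTsum, ← hT12, Multiset.sum_add, hT₁rep, Multiset.sum_replicate]
  have hkgH : k • g ∈ H := by
    have : k • g = (B.sum + (y : G)) - T₂.sum := by
      rw [← hsumeq]; abel
    rw [this]
    exact H.sub_mem (H.add_mem hBsum hh₀H) hT₂H
  have hpk : (p * k) • g = 0 := by
    rw [mul_smul]
    exact hpH _ hkgH
  have hdvd : n ∣ p * k := horder ▸ addOrderOf_dvd_iff_nsmul_eq_zero.mpr hpk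
  have hmk : m ∣ k := by
    refine Nat.dvd_of_mul_dvd_mul_left (show 0 < p by omega) ?_
    rwa [hpm]
  have hk0 : k = 0 := by
    rcases Nat.eq_zero_or_pos k with h | h
    · exact h
    · exact absurd (Nat.le_of_dvd h hmk) (by omega)
  -- k = 0: T = T₂ = B, contradiction with y ≠ 0
  have hT₁0 : T₁ = 0 := by rw [hT₁rep, hk0]; rfl
  have hTT₂ : T = T₂ := by rw [← hT12, hT₁0, zero_add]
  have hcardT₂ : Multiset.card T₂ = n := by rw [← hTT₂]; exact hTcard
  have hT₂B : T₂ = B := Multiset.eq_of_le_of_card_le hT₂le (by omega)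
  have : B.sum = B.sum + (y : G) := by rw [← hTsum, hTT₂, hT₂B]
  exact hh₀ (by linear_combination (norm := abel_nf) this.symm)
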